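/- Let k₀ ∈ ℂ with Im k₀ > 0 and let r > 0 be a real number. Then the symmetric improper integral of x·e^{ixr}/(x² − k₀²) over the real line converges and equals iπ·e^{ik₀r}; that is, lim_{A→∞} ∫_{−A}^{A} x e^{ixr}/(x² − k₀²) dx = iπ e^{ik₀ r}. -/

import Mathlib

open Complex MeasureTheory Filter

noncomputable section
namespace Stmt0Aux
open Real Set FourierTransform

lemma tendsto_mul_exp {μ : ℝ} (hμ : μ < 0) :
    Tendsto (fun A : ℝ => A * Real.exp (μ * A)) atTop (nhds 0) := by
  have h0 : (0:ℝ) < -μ := by linarith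
  have h := (tendsto_pow_mul_exp_neg_atTop_nhds_zero 1).comp
    (tendsto_id.const_mul_atTop h0)
  have h2 := h.const_mul (-μ)⁻¹
  rw [mul_zero] at h2
  refine h2.congr (fun A => ?_)
  simp only [Function.comp_apply, pow_one, id_eq, neg_mul, neg_neg]
  have hne : μ ≠ 0 := by linarith
  field_simp

lemma cont_texp (c : ℂ) : Continuous (fun t : ℝ => (t : ℂ) * Complex.exp (c * t)) :=
  Complex.continuous_ofReal.mul
    (Complex.continuous_exp.comp (continuous_const.mul Complex.continuous_ofReal))

lemma integrableOn_texp {c : ℂ} (hc : c.re < 0) :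
    IntegrableOn (fun t : ℝ => (t : ℂ) * Complex.exp (c * t)) (Ioi (0:ℝ)) := by
  have hb : (0:ℝ) < -(c.re/2) := by linarith
  have hreal : IntegrableOn (fun t : ℝ => t * Real.exp (c.re * t)) (Ioi (0:ℝ)) := by
    apply integrable_of_isBigO_exp_neg hb (by fun_prop)
    rw [Asymptotics.isBigO_iff]
    refine ⟨1, ?_⟩
    have h1 : Tendsto (fun A : ℝ => A * Real.exp ((c.re/2) * A)) atTop (nhds 0) :=
      tendsto_mul_exp (by linarith)
    filter_upwards [h1.eventually (eventually_le_nhds (by norm_num : (0:ℝ) < 1)),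
      eventually_ge_atTop (0:ℝ)] with t ht ht0
    simp only [Real.norm_eq_abs, neg_neg, one_mul]
    rw [_root_.abs_of_nonneg (by positivity), _root_.abs_of_nonneg (Real.exp_pos _).le]
    have hsplit : Real.exp (c.re * t) = Real.exp (c.re/2*t) * Real.exp (c.re/2*t) := by
      rw [← Real.exp_add]; ring_nf
    rw [hsplit, ← mul_assoc]
    calc t * Real.exp (c.re/2*t) * Real.exp (c.re/2*t)
        ≤ 1 * Real.exp (c.re/2*t) := mul_le_mul_of_nonneg_right ht (Real.exp_pos _).le
      _ = Real.exp (c.re/2*t) := one_mul _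
  refine Integrable.mono' hreal (cont_texp c).aestronglyMeasurable ?_
  filter_upwards [ae_restrict_mem measurableSet_Ioi] with t ht
  have : ‖(t : ℂ) * Complex.exp (c * t)‖ = |t| * Real.exp (c.re * t) := by
    simp [Complex.norm_exp, Complex.mul_re]
  rw [this, _root_.abs_of_nonneg (le_of_lt ht)]

lemma integral_texp {c : ℂ} (hc : c.re < 0) :
    ∫ t in Ioi (0:ℝ), (t : ℂ) * Complex.exp (c * t) = 1 / c ^ 2 := by
  have hc0 : c ≠ 0 := fun h => by simp [h] at hc
  have key : ∀ A : ℝ, ∫ t in (0:ℝ)..A, (t:ℂ) * Complex.exp (c*t)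
      = ((A:ℂ)/c - 1/c^2) * Complex.exp (c*A) + 1/c^2 := by
    intro A
    have hder : ∀ x ∈ uIcc (0:ℝ) A,
        HasDerivAt (fun t:ℝ => ((t:ℂ)/c - 1/c^2) * Complex.exp (c*t))
          ((x:ℂ) * Complex.exp (c*x)) x := by
      intro x _
      have hz : HasDerivAt (fun z:ℂ => z/c - 1/c^2) (1/c) (x:ℂ) := by
        have h := ((hasDerivAt_id ((x:ℝ):ℂ)).div_const c).sub_const (1/c^2)
        simp only [one_div, id_eq] at h ⊢
        exact h
      have he : HasDerivAt (fun z:ℂ => Complex.exp (c*z))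
          (Complex.exp (c*(x:ℂ)) * c) (x:ℂ) := by
        have : HasDerivAt (fun z:ℂ => c*z) c (x:ℂ) := by
          simpa using (hasDerivAt_id ((x:ℝ):ℂ)).const_mul c
        exact this.cexp
      have h2 := (hz.mul he).comp_ofReal
      convert h2 using 1
      · rfl
      field_simp
      ring
    rw [intervalIntegral.integral_eq_sub_of_hasDerivAt hder
      ((cont_texp c).intervalIntegrable _ _)]
    simp [Complex.exp_zero]
  have lim1 : Tendsto (fun A:ℝ => ∫ t in (0:ℝ)..A, (t:ℂ) * Complex.exp (c*t)) atTop
      (nhds (∫ t in Ioi (0:ℝ), (t:ℂ) * Complex.exp (c*t))) :=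
    intervalIntegral_tendsto_integral_Ioi 0 (integrableOn_texp hc) tendsto_id
  have hev : ∀ᶠ A:ℝ in atTop, ‖((A:ℂ)/c - 1/c^2) * Complex.exp (c*(A:ℂ))‖ ≤
      ‖c‖⁻¹ * (A * Real.exp (c.re*A)) + ‖(1/c^2 : ℂ)‖ * Real.exp (c.re*A) := by
    filter_upwards [eventually_ge_atTop (0:ℝ)] with A hA
    have hnorm : ‖Complex.exp (c*(A:ℂ))‖ = Real.exp (c.re * A) := by
      simp [Complex.norm_exp, Complex.mul_re]
    calc ‖((A:ℂ)/c - 1/c^2) * Complex.exp (c*(A:ℂ))‖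
        = ‖(A:ℂ)/c - 1/c^2‖ * Real.exp (c.re*A) := by rw [norm_mul, hnorm]
      _ ≤ (‖(A:ℂ)/c‖ + ‖(1/c^2:ℂ)‖) * Real.exp (c.re*A) :=
          mul_le_mul_of_nonneg_right (norm_sub_le _ _) (Real.exp_pos _).le
      _ = ‖c‖⁻¹ * (A * Real.exp (c.re*A)) + ‖(1/c^2:ℂ)‖ * Real.exp (c.re*A) := by
          rw [norm_div, Complex.norm_real, Real.norm_eq_abs, _root_.abs_of_nonneg hA]
          ring
  have htend : Tendsto (fun A:ℝ => ‖c‖⁻¹ * (A * Real.exp (c.re*A))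
      + ‖(1/c^2:ℂ)‖ * Real.exp (c.re*A)) atTop (nhds 0) := by
    have e1 : Tendsto (fun A:ℝ => A * Real.exp (c.re * A)) atTop (nhds 0) :=
      tendsto_mul_exp hc
    have e2 : Tendsto (fun A:ℝ => Real.exp (c.re * A)) atTop (nhds 0) := by
      apply Real.tendsto_exp_atBot.comp
      exact (tendsto_const_mul_atBot_of_neg hc).mpr tendsto_id
    have h3 := (e1.const_mul (‖c‖⁻¹)).add (e2.const_mul (‖(1/c^2:ℂ)‖))
    simpa only [mul_zero, add_zero] using h3
  have lim2 : Tendsto (fun A:ℝ => ((A:ℂ)/c - 1/c^2) * Complex.exp (c*A) + 1/c^2) atTop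
      (nhds (0 + 1/c^2)) :=
    Tendsto.add_const _ (squeeze_zero_norm' hev htend)
  have := tendsto_nhds_unique lim1 ((funext key : _) ▸ lim2)
  rw [this, zero_add]

section FT
variable {k₀ : ℂ} (hk : 0 < k₀.im)

def φf (k₀ : ℂ) : ℝ → ℂ := fun t =>
  -((|t| : ℝ) : ℂ) / 2 * Complex.exp (Complex.I * k₀ * ((|t| : ℝ) : ℂ))

lemma φf_cont : Continuous (φf k₀) := by
  unfold φf; fun_prop

lemma φf_even (t : ℝ) : φf k₀ (-t) = φf k₀ t := by simp [φf]

lemma φf_apply (k₀ : ℂ) (t : ℝ) : φf k₀ t =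
    -((|t| : ℝ) : ℂ) / 2 * Complex.exp (Complex.I * k₀ * ((|t| : ℝ) : ℂ)) := rfl


lemma ne_sub (hk : 0 < k₀.im) (x : ℝ) : (x:ℂ) - k₀ ≠ 0 := by
  intro h
  have := congrArg Complex.im h
  simp at this
  linarith

lemma ne_add (hk : 0 < k₀.im) (x : ℝ) : (x:ℂ) + k₀ ≠ 0 := by
  intro h
  have := congrArg Complex.im h
  simp at this
  linarith

lemma Ik_re : (Complex.I * k₀).re = -k₀.im := by simp

lemma φf_intOn_Ioi (hk : 0 < k₀.im) : IntegrableOn (φf k₀) (Ioi (0:ℝ)) := by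
  have hre : (Complex.I * k₀).re < 0 := by rw [Ik_re]; linarith
  have h := (integrableOn_texp hre).const_mul (-(1:ℂ)/2)
  refine IntegrableOn.congr_fun h (fun t ht => ?_) measurableSet_Ioi
  rw [φf_apply, _root_.abs_of_pos (show (0:ℝ) < t from ht)]
  ring

lemma φf_int (hk : 0 < k₀.im) : Integrable (φf k₀) := by
  rw [← integrableOn_univ, ← Set.Iic_union_Ioi (a := (0:ℝ))]
  refine IntegrableOn.union ?_ (φf_intOn_Ioi hk)
  have m : MeasurableEmbedding (fun x:ℝ => -x) := (Homeomorph.neg ℝ).measurableEmbedding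
  have hIci : IntegrableOn (φf k₀) (Ici (0:ℝ)) :=
    Iff.mpr integrableOn_Ici_iff_integrableOn_Ioi (φf_intOn_Ioi hk)
  rw [show (volume : Measure ℝ) = Measure.map (fun x => -x) volume from
    (Measure.map_neg_eq_self _).symm, m.integrableOn_map_iff]
  have hpre : (fun x : ℝ => -x) ⁻¹' (Iic 0) = Ici 0 := by
    ext x; simp
  rw [hpre]
  apply hIci.congr_fun ?_ measurableSet_Ici
  intro t _
  exact (φf_even t).symm

def hC (k₀ : ℂ) (z : ℂ) : ℂ := (((z - k₀)^2)⁻¹ + ((z + k₀)^2)⁻¹)/2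

lemma fourier_φf (hk : 0 < k₀.im) (ξ : ℝ) :
    𝓕 (φf k₀) ξ = hC k₀ ((2*π*ξ : ℝ) : ℂ) := by
  have hre₁ : (Complex.I * (k₀ - 2*π*ξ)).re < 0 := by
    simp [Complex.mul_re]; linarith [hk]
  have hre₂ : (Complex.I * (k₀ + 2*π*ξ)).re < 0 := by
    simp [Complex.mul_re]; linarith [hk]
  rw [Real.fourier_real_eq_integral_exp_smul]
  have hFint : Integrable (fun v : ℝ => Complex.exp (↑(-2 * π * v * ξ) * Complex.I) • φf k₀ v) := by
    simp only [smul_eq_mul]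
    refine Integrable.bdd_mul (φf_int hk) ?_ (c := 1) (Eventually.of_forall fun v => ?_)
    · apply Continuous.aestronglyMeasurable
      fun_prop
    · rw [show ‖Complex.exp (↑(-2 * π * v * ξ) * Complex.I)‖
        = Real.exp ((↑(-2 * π * v * ξ) * Complex.I).re) from Complex.norm_exp _]
      simp
  rw [← intervalIntegral.integral_Iic_add_Ioi (hFint.integrableOn) (hFint.integrableOn)]
  have hIoi : ∫ v in Ioi (0:ℝ), Complex.exp (↑(-2 * π * v * ξ) * Complex.I) • φf k₀ v
      = (-(1:ℂ)/2) * (1/(Complex.I * (k₀ - 2*π*ξ))^2) := by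
    rw [setIntegral_congr_fun measurableSet_Ioi
      (show EqOn (fun v : ℝ => Complex.exp (↑(-2 * π * v * ξ) * Complex.I) • φf k₀ v)
        (fun v : ℝ => (-(1:ℂ)/2) *
        ((v:ℂ) * Complex.exp ((Complex.I * (k₀ - 2*π*ξ)) * v))) (Ioi 0) from ?_)]
    · rw [MeasureTheory.integral_const_mul, integral_texp hre₁]
    · intro v hv
      have hv' : |v| = v := _root_.abs_of_pos hv
      have hexp : Complex.exp (↑(-2 * π * v * ξ) * Complex.I)
          * Complex.exp (Complex.I * k₀ * (v:ℂ))
          = Complex.exp ((Complex.I * (k₀ - 2*π*ξ)) * (v:ℂ)) := by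
        rw [← Complex.exp_add]; congr 1; push_cast; ring
      show Complex.exp (↑(-2 * π * v * ξ) * Complex.I) • φf k₀ v = _
      rw [smul_eq_mul, φf_apply, hv']
      calc Complex.exp (↑(-2 * π * v * ξ) * Complex.I)
            * (-((v:ℝ):ℂ) / 2 * Complex.exp (Complex.I * k₀ * ((v:ℝ):ℂ)))
          = (-(1:ℂ)/2) * ((v:ℂ) * (Complex.exp (↑(-2 * π * v * ξ) * Complex.I)
            * Complex.exp (Complex.I * k₀ * (v:ℂ)))) := by ring
        _ = (-(1:ℂ)/2) * ((v:ℂ) * Complex.exp ((Complex.I * (k₀ - 2*π*ξ)) * (v:ℂ))) := by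
            rw [hexp]
  have hIic : ∫ v in Iic (0:ℝ), Complex.exp (↑(-2 * π * v * ξ) * Complex.I) • φf k₀ v
      = (-(1:ℂ)/2) * (1/(Complex.I * (k₀ + 2*π*ξ))^2) := by
    have flip := integral_comp_neg_Iic (0:ℝ)
      (fun x : ℝ => Complex.exp (↑(-2 * π * (-x) * ξ) * Complex.I) • φf k₀ (-x))
    simp only [neg_neg, neg_zero] at flip
    rw [flip]
    rw [setIntegral_congr_fun measurableSet_Ioi
      (show EqOn (fun v : ℝ => Complex.exp (↑(-2 * π * (-v) * ξ) * Complex.I) • φf k₀ (-v))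
        (fun v : ℝ => (-(1:ℂ)/2) *
        ((v:ℂ) * Complex.exp ((Complex.I * (k₀ + 2*π*ξ)) * v))) (Ioi 0) from ?_)]
    · rw [MeasureTheory.integral_const_mul, integral_texp hre₂]
    · intro v hv
      have hv' : |v| = v := _root_.abs_of_pos hv
      have hexp : Complex.exp (↑(-2 * π * (-v) * ξ) * Complex.I)
          * Complex.exp (Complex.I * k₀ * (v:ℂ))
          = Complex.exp ((Complex.I * (k₀ + 2*π*ξ)) * (v:ℂ)) := by
        rw [← Complex.exp_add]; congr 1; push_cast; ring
      show Complex.exp (↑(-2 * π * (-v) * ξ) * Complex.I) • φf k₀ (-v) = _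
      rw [smul_eq_mul, φf_even, φf_apply, hv']
      calc Complex.exp (↑(-2 * π * (-v) * ξ) * Complex.I)
            * (-((v:ℝ):ℂ) / 2 * Complex.exp (Complex.I * k₀ * ((v:ℝ):ℂ)))
          = (-(1:ℂ)/2) * ((v:ℂ) * (Complex.exp (↑(-2 * π * (-v) * ξ) * Complex.I)
            * Complex.exp (Complex.I * k₀ * (v:ℂ)))) := by ring
        _ = (-(1:ℂ)/2) * ((v:ℂ) * Complex.exp ((Complex.I * (k₀ + 2*π*ξ)) * (v:ℂ))) := by
            rw [hexp]
  rw [hIic, hIoi]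
  have h1 : (Complex.I * (k₀ - 2*π*ξ))^2 = -((((2*π*ξ : ℝ):ℂ) - k₀)^2) := by
    rw [mul_pow, Complex.I_sq]; push_cast; ring
  have h2 : (Complex.I * (k₀ + 2*π*ξ))^2 = -((((2*π*ξ : ℝ):ℂ) + k₀)^2) := by
    rw [mul_pow, Complex.I_sq]; push_cast; ring
  rw [h1, h2, hC, div_neg, div_neg]
  ring

lemma integrable_sq_inv (w : ℂ) (hw : w.im ≠ 0) :
    Integrable (fun x : ℝ => (((x:ℂ) - w)^2)⁻¹) := by
  have hne : ∀ x : ℝ, (x:ℂ) - w ≠ 0 := by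
    intro x h
    have := congrArg Complex.im h
    simp at this
    exact hw this
  have h1 : Integrable (fun y : ℝ => (1 + (w.im⁻¹ * y)^2)⁻¹) :=
    integrable_inv_one_add_sq.comp_mul_left' (inv_ne_zero hw)
  have h2 := (h1.comp_sub_right w.re).const_mul ((w.im^2)⁻¹)
  refine h2.mono' ?_ ?_
  · apply Continuous.aestronglyMeasurable
    exact ((Complex.continuous_ofReal.sub continuous_const).pow 2).inv₀
      (fun x => pow_ne_zero 2 (hne x))
  · filter_upwards with x
    have hval : ‖(((x:ℂ) - w)^2)⁻¹‖ = ((x - w.re)^2 + w.im^2)⁻¹ := by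
      rw [norm_inv, norm_pow]
      congr 1
      rw [Complex.sq_norm, Complex.normSq_apply]
      simp [Complex.sub_re, Complex.sub_im]
      ring
    rw [hval]
    have heq : (w.im^2)⁻¹ * (1 + (w.im⁻¹ * (x - w.re))^2)⁻¹
        = ((x - w.re)^2 + w.im^2)⁻¹ := by
      rw [← mul_inv]
      congr 1
      field_simp
      try ring
    rw [heq]

lemma integrable_hC (hk : 0 < k₀.im) : Integrable (fun x : ℝ => hC k₀ (x:ℂ)) := by
  have h1 := integrable_sq_inv k₀ (ne_of_gt hk)
  have h2 := integrable_sq_inv (-k₀) (by simp; exact (ne_of_gt hk))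
  have h2' : Integrable (fun x : ℝ => (((x:ℂ) + k₀)^2)⁻¹) := by
    simpa [sub_neg_eq_add] using h2
  have := (h1.add h2').div_const 2
  exact this.congr (Eventually.of_forall (fun x => rfl))

lemma integrable_fourier_φf (hk : 0 < k₀.im) : Integrable (𝓕 (φf k₀)) := by
  have heq : 𝓕 (φf k₀) = fun ξ : ℝ => hC k₀ ((2*π*ξ : ℝ):ℂ) := funext (fourier_φf hk)
  rw [heq]
  have h2pi : (2*π : ℝ) ≠ 0 := by positivity
  have h := (integrable_hC hk).comp_mul_left' h2pi
  exact h

lemma integrable_exp_hC (hk : 0 < k₀.im) (r : ℝ) :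
    Integrable (fun x : ℝ => Complex.exp (Complex.I * x * r) * hC k₀ (x:ℂ)) := by
  refine Integrable.bdd_mul (integrable_hC hk) ?_ (c := 1) (Eventually.of_forall fun x => ?_)
  · apply Continuous.aestronglyMeasurable; fun_prop
  · rw [show ‖Complex.exp (Complex.I * x * r)‖
      = Real.exp ((Complex.I * x * r).re) from Complex.norm_exp _]
    simp [Complex.mul_re, Complex.mul_im]

lemma integral_exp_hC (hk : 0 < k₀.im) {r : ℝ} (hr : 0 < r) :
    ∫ x : ℝ, Complex.exp (Complex.I * x * r) * hC k₀ (x:ℂ)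
      = -((π * r : ℝ) : ℂ) * Complex.exp (Complex.I * k₀ * r) := by
  have hinv := MeasureTheory.Integrable.fourierInv_fourier_eq (φf_int hk)
    (integrable_fourier_φf hk) ((φf_cont (k₀ := k₀)).continuousAt (x := r))
  rw [Real.fourierInv_eq'] at hinv
  simp only [RCLike.inner_apply, conj_trivial, mul_comm r] at hinv
  -- hinv : ∫ v, cexp (↑(2π(v*r))*I) • 𝓕 (φf k₀) v = φf k₀ r
  have hcomp : (fun v : ℝ => Complex.exp (↑(2 * π * (v * r)) * Complex.I) • 𝓕 (φf k₀) v)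
      = fun v : ℝ => (fun x : ℝ => Complex.exp (Complex.I * x * r) * hC k₀ (x:ℂ)) (2*π*v) := by
    funext v
    rw [fourier_φf hk, smul_eq_mul]
    congr 1
    congr 1
    push_cast
    ring
  rw [hcomp] at hinv
  rw [MeasureTheory.Measure.integral_comp_mul_left
    (fun x : ℝ => Complex.exp (Complex.I * x * r) * hC k₀ (x:ℂ)) (2*π)] at hinv
  have habs : |(2*π : ℝ)⁻¹| = (2*π)⁻¹ := by
    rw [_root_.abs_of_pos]; positivity
  rw [habs] at hinv
  have hφr : φf k₀ r = -((r:ℝ):ℂ)/2 * Complex.exp (Complex.I * k₀ * r) := by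
    rw [φf_apply, _root_.abs_of_pos hr]
  rw [hφr] at hinv
  have h2pi : ((2*π : ℝ) : ℂ) ≠ 0 := by
    simp only [ne_eq, Complex.ofReal_eq_zero]
    positivity
  have := congrArg (fun z : ℂ => ((2*π : ℝ) : ℂ) * z) hinv
  rw [Complex.real_smul, ← mul_assoc, ← Complex.ofReal_mul] at this
  rw [show (2*π) * (2*π:ℝ)⁻¹ = 1 by field_simp, Complex.ofReal_one, one_mul] at this
  rw [this]
  push_cast
  ring

def gC (k₀ : ℂ) (z : ℂ) : ℂ := ((z - k₀)⁻¹ + (z + k₀)⁻¹)/2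

lemma cont_gC (hk : 0 < k₀.im) : Continuous (fun x : ℝ => gC k₀ (x:ℂ)) := by
  unfold gC
  apply Continuous.div_const
  apply Continuous.add
  · exact ((Complex.continuous_ofReal.sub continuous_const)).inv₀ (ne_sub hk)
  · exact ((Complex.continuous_ofReal.add continuous_const)).inv₀ (ne_add hk)

lemma cont_hC (hk : 0 < k₀.im) : Continuous (fun x : ℝ => hC k₀ (x:ℂ)) := by
  unfold hC
  apply Continuous.div_const
  apply Continuous.add
  · exact ((Complex.continuous_ofReal.sub continuous_const).pow 2).inv₀
      (fun x => pow_ne_zero 2 (ne_sub hk x))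
  · exact ((Complex.continuous_ofReal.add continuous_const).pow 2).inv₀
      (fun x => pow_ne_zero 2 (ne_add hk x))

lemma exp_norm_one (s r : ℝ) : ‖Complex.exp (Complex.I * s * r)‖ = 1 := by
  rw [show ‖Complex.exp (Complex.I * s * r)‖
    = Real.exp ((Complex.I * (s:ℂ) * (r:ℂ)).re) from Complex.norm_exp _]
  simp [Complex.mul_re, Complex.mul_im]

lemma integrand_eq (hk : 0 < k₀.im) (r : ℝ) (x : ℝ) :
    (x : ℂ) * Complex.exp (Complex.I * x * r) / ((x:ℂ) ^ 2 - k₀ ^ 2)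
      = Complex.exp (Complex.I * x * r) * gC k₀ (x:ℂ) := by
  have h1 : (x:ℂ)^2 - k₀^2 = ((x:ℂ) - k₀) * ((x:ℂ) + k₀) := by ring
  rw [h1, gC]
  field_simp [ne_sub hk x, ne_add hk x]
  ring

lemma hasDerivAt_F (hk : 0 < k₀.im) {r : ℝ} (hr : 0 < r) (x : ℝ) :
    HasDerivAt (fun y : ℝ => Complex.exp (Complex.I*y*r) * gC k₀ (y:ℂ) * (Complex.I*r)⁻¹)
      (Complex.exp (Complex.I*x*r) * gC k₀ (x:ℂ)
        - (Complex.I*r)⁻¹ * (Complex.exp (Complex.I*x*r) * hC k₀ (x:ℂ))) x := by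
  have hIr : (Complex.I * (r:ℂ)) ≠ 0 :=
    mul_ne_zero Complex.I_ne_zero (Complex.ofReal_ne_zero.mpr hr.ne')
  have he : HasDerivAt (fun z : ℂ => Complex.exp (Complex.I*z*r))
      (Complex.exp (Complex.I*(x:ℂ)*r) * (Complex.I*r)) (x:ℂ) := by
    have hlin : HasDerivAt (fun z : ℂ => Complex.I*z*(r:ℂ)) (Complex.I*r) (x:ℂ) := by
      simpa using ((hasDerivAt_id ((x:ℝ):ℂ)).const_mul Complex.I).mul_const (r:ℂ)
    exact hlin.cexp
  have hg1 : HasDerivAt (fun z : ℂ => (z - k₀)⁻¹)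
      (-1 / ((x:ℂ) - k₀)^2) (x:ℂ) := by
    have h := ((hasDerivAt_id ((x:ℝ):ℂ)).sub_const k₀).inv (ne_sub hk x)
    exact h
  have hg2 : HasDerivAt (fun z : ℂ => (z + k₀)⁻¹)
      (-1 / ((x:ℂ) + k₀)^2) (x:ℂ) := by
    have h := ((hasDerivAt_id ((x:ℝ):ℂ)).add_const k₀).inv (ne_add hk x)
    exact h
  have hgc : HasDerivAt (fun z : ℂ => gC k₀ z)
      ((-1 / ((x:ℂ) - k₀)^2 + -1 / ((x:ℂ) + k₀)^2)/2) (x:ℂ) := (hg1.add hg2).div_const 2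
  have hFc := (he.mul hgc).mul_const ((Complex.I*(r:ℂ))⁻¹)
  have h2 := hFc.comp_ofReal
  convert h2 using 1
  · rfl
  rw [gC, hC]
  field_simp [ne_sub hk x, ne_add hk x, Complex.ofReal_ne_zero.mpr hr.ne']
  ring

theorem main (k₀ : ℂ) (hk : 0 < k₀.im) (r : ℝ) (hr : 0 < r) :
    Tendsto (fun A : ℝ =>
        ∫ x in (-A)..A, (x : ℂ) * Complex.exp (Complex.I * x * r) / (x ^ 2 - k₀ ^ 2))
      atTop (nhds (Complex.I * Real.pi * Complex.exp (Complex.I * k₀ * r))) := by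
  have hIr : (Complex.I * (r:ℂ)) ≠ 0 :=
    mul_ne_zero Complex.I_ne_zero (Complex.ofReal_ne_zero.mpr hr.ne')
  set F : ℝ → ℂ := fun y => Complex.exp (Complex.I*y*r) * gC k₀ (y:ℂ) * (Complex.I*r)⁻¹
    with hFdef
  have conte : Continuous (fun x : ℝ => Complex.exp (Complex.I*(x:ℂ)*r)) := by fun_prop
  have cont1 : Continuous (fun x : ℝ => Complex.exp (Complex.I*x*r) * gC k₀ (x:ℂ)) :=
    conte.mul (cont_gC hk)
  have cont2 : Continuous (fun x : ℝ => Complex.exp (Complex.I*x*r) * hC k₀ (x:ℂ)) :=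
    conte.mul (cont_hC hk)
  have key : ∀ A : ℝ, ∫ x in (-A)..A,
      (x : ℂ) * Complex.exp (Complex.I * x * r) / ((x:ℂ) ^ 2 - k₀ ^ 2)
      = (F A - F (-A)) + (Complex.I*r)⁻¹ *
        ∫ x in (-A)..A, Complex.exp (Complex.I*x*r) * hC k₀ (x:ℂ) := by
    intro A
    have hD := intervalIntegral.integral_eq_sub_of_hasDerivAt
      (f := F)
      (f' := fun x : ℝ => Complex.exp (Complex.I*x*r) * gC k₀ (x:ℂ)
        - (Complex.I*r)⁻¹ * (Complex.exp (Complex.I*x*r) * hC k₀ (x:ℂ)))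
      (fun x _ => hasDerivAt_F hk hr x)
      ((cont1.sub (continuous_const.mul cont2)).intervalIntegrable (-A) A)
    rw [intervalIntegral.integral_sub (cont1.intervalIntegrable _ _)
      ((cont2.intervalIntegrable _ _).const_mul _),
      intervalIntegral.integral_const_mul] at hD
    have hcongr : ∫ x in (-A)..A,
        (x : ℂ) * Complex.exp (Complex.I * x * r) / ((x:ℂ) ^ 2 - k₀ ^ 2)
        = ∫ x in (-A)..A, Complex.exp (Complex.I*x*r) * gC k₀ (x:ℂ) :=
      intervalIntegral.integral_congr (fun x _ => integrand_eq hk r x)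
    rw [hcongr]
    linear_combination hD
  have TF : Tendsto (fun A : ℝ => F A - F (-A)) atTop (nhds 0) := by
    have hbnd : ∀ s : ℝ, ‖k₀‖ + 1 ≤ |s| → ‖F s‖ ≤ (|s| - ‖k₀‖)⁻¹ * ‖(Complex.I*(r:ℂ))⁻¹‖ := by
      intro s hs
      have hpos : (0:ℝ) < |s| - ‖k₀‖ := by linarith
      have h1 : |s| - ‖k₀‖ ≤ ‖(s:ℂ) - k₀‖ := by
        have := norm_sub_norm_le ((s:ℂ)) k₀
        rw [Complex.norm_real, Real.norm_eq_abs] at this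
        linarith
      have h2 : |s| - ‖k₀‖ ≤ ‖(s:ℂ) + k₀‖ := by
        have := norm_sub_norm_le ((s:ℂ)) (-k₀)
        rw [Complex.norm_real, Real.norm_eq_abs, sub_neg_eq_add, norm_neg] at this
        linarith
      have hgb : ‖gC k₀ (s:ℂ)‖ ≤ (|s| - ‖k₀‖)⁻¹ := by
        rw [gC]
        calc ‖(((s:ℂ) - k₀)⁻¹ + ((s:ℂ) + k₀)⁻¹)/2‖
            = ‖((s:ℂ) - k₀)⁻¹ + ((s:ℂ) + k₀)⁻¹‖/2 := by
              rw [norm_div]; norm_num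
          _ ≤ (‖((s:ℂ) - k₀)⁻¹‖ + ‖((s:ℂ) + k₀)⁻¹‖)/2 := by
              gcongr
              exact norm_add_le _ _
          _ ≤ ((|s| - ‖k₀‖)⁻¹ + (|s| - ‖k₀‖)⁻¹)/2 := by
              gcongr (?_ + ?_)/2
              · rw [norm_inv]
                exact inv_anti₀ hpos h1
              · rw [norm_inv]
                exact inv_anti₀ hpos h2
          _ = (|s| - ‖k₀‖)⁻¹ := by ring
      calc ‖F s‖ = ‖Complex.exp (Complex.I*s*r)‖ * ‖gC k₀ (s:ℂ)‖ * ‖(Complex.I*(r:ℂ))⁻¹‖ := by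
            simp only [hFdef]; rw [norm_mul, norm_mul]
        _ = ‖gC k₀ (s:ℂ)‖ * ‖(Complex.I*(r:ℂ))⁻¹‖ := by rw [exp_norm_one]; ring
        _ ≤ (|s| - ‖k₀‖)⁻¹ * ‖(Complex.I*(r:ℂ))⁻¹‖ :=
            mul_le_mul_of_nonneg_right hgb (norm_nonneg _)
    have hBtend : Tendsto (fun A : ℝ => (A - ‖k₀‖)⁻¹ * ‖(Complex.I*(r:ℂ))⁻¹‖) atTop (nhds 0) := by
      have h1 : Tendsto (fun A : ℝ => A - ‖k₀‖) atTop atTop :=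
        tendsto_atTop_add_const_right atTop (-‖k₀‖) tendsto_id
      have := h1.inv_tendsto_atTop.mul_const (‖(Complex.I*(r:ℂ))⁻¹‖)
      simpa using this
    have T1 : Tendsto F atTop (nhds 0) := by
      apply squeeze_zero_norm' ?_ hBtend
      filter_upwards [eventually_ge_atTop (‖k₀‖ + 1)] with A hA
      have habs : |A| = A := _root_.abs_of_pos (by linarith [norm_nonneg k₀])
      have := hbnd A (by rw [habs]; exact hA)
      rw [habs] at this
      exact this
    have T1' : Tendsto (fun A : ℝ => F (-A)) atTop (nhds 0) := by
      apply squeeze_zero_norm' ?_ hBtend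
      filter_upwards [eventually_ge_atTop (‖k₀‖ + 1)] with A hA
      have hA0 : (0:ℝ) < A := by
        have := norm_nonneg k₀; linarith
      have habs : |(-A)| = A := by rw [abs_neg, _root_.abs_of_pos hA0]
      have := hbnd (-A) (by rw [habs]; exact hA)
      rw [habs] at this
      exact this
    simpa using T1.sub T1'
  have T2 : Tendsto (fun A : ℝ => ∫ x in (-A)..A, Complex.exp (Complex.I*x*r) * hC k₀ (x:ℂ))
      atTop (nhds (-((π * r : ℝ):ℂ) * Complex.exp (Complex.I * k₀ * r))) := by
    have := MeasureTheory.intervalIntegral_tendsto_integral (integrable_exp_hC hk r)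
      tendsto_neg_atTop_atBot tendsto_id
    rw [integral_exp_hC hk hr] at this
    exact this
  have Tall := TF.add (T2.const_mul ((Complex.I*(r:ℂ))⁻¹))
  rw [zero_add] at Tall
  have hfinal : (Complex.I*(r:ℂ))⁻¹ * (-((π * r : ℝ):ℂ) * Complex.exp (Complex.I * k₀ * r))
      = Complex.I * Real.pi * Complex.exp (Complex.I * k₀ * r) := by
    rw [mul_inv, Complex.inv_I]
    push_cast
    have hrne : (r:ℂ) ≠ 0 := Complex.ofReal_ne_zero.mpr hr.ne'
    field_simp
  rw [hfinal] at Tall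
  exact Tendsto.congr (fun A => (key A).symm) Tall

end FT

end Stmt0Aux

/-- For a complex wavenumber `k₀` with positive imaginary part (lossy medium) and `r > 0`,
the symmetric improper integral `lim_{A→∞} ∫_{-A}^{A} x e^{ixr}/(x² - k₀²) dx` converges
to `iπ e^{ik₀ r}`. -/
theorem stmt0 (k₀ : ℂ) (hk : 0 < k₀.im) (r : ℝ) (hr : 0 < r) :
    Tendsto (fun A : ℝ =>
        ∫ x in (-A)..A, (x : ℂ) * Complex.exp (Complex.I * x * r) / (x ^ 2 - k₀ ^ 2))
      atTop (nhds (Complex.I * Real.pi * Complex.exp (Complex.I * k₀ * r))) :=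
  Stmt0Aux.main k₀ hk r hr
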